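/- Let E be a pseudo-normed real vector space and F a Banach space (a complete normed real vector space). Let s_0 < s < s_1 be real numbers, q ∈ [1,∞], r > 0, and let Φ : B_{s,q}(0,r) → Σ^{s_0}_∞(F) be continuous (with respect to the distances induced by ‖·‖_{Σ^s_q(E)} and ‖·‖_{Σ^{s_0}_∞(F)}) and satisfy the tame estimate together with the following weak contraction for smooth data: there exists C₀ > 0 such that ‖Φ(v) − Φ(w)‖_{Σ^{s_0}_∞(F)} ≤ C₀ ‖v − w‖_{Σ^{s_0}_1(E)} for all v, w ∈ Σ^∞_1(E) ∩ B_{s,q}(0,r). Then Φ(v) ∈ Σ^s_q(F) for all v ∈ B_{s,q}(0,r), and the mapping Φ : B_{s,q}(0,r) → Σ^s_q(F) is continuous. -/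

import Mathlib

open Filter
open scoped ENNReal NNReal

/-- A pseudo-norm on a real vector space: nonnegative, symmetric, subadditive,
and vanishing exactly at `0`. -/
structure IsPseudoNorm {E : Type*} [AddCommGroup E] [Module ℝ E] (N : E → ℝ) : Prop where
  nonneg : ∀ x, 0 ≤ N x
  neg : ∀ x, N (-x) = N x
  add_le : ∀ x y, N (x + y) ≤ N x + N y
  eq_zero_iff : ∀ x, N x = 0 ↔ x = 0

/-- The `Σ^s_q(E)` pseudo-norm of a sequence `f : ℕ → E`:
`(∑_k 2^{qks} ‖f_k‖_E^q)^{1/q}` for `q < ∞` and `sup_k 2^{ks} ‖f_k‖_E` for `q = ∞`. -/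
noncomputable def sigmaNorm {E : Type*} (N : E → ℝ) (s : ℝ) (q : ℝ≥0∞) (f : ℕ → E) : ℝ≥0∞ :=
  if q = ⊤ then ⨆ k : ℕ, ENNReal.ofReal ((2 : ℝ) ^ ((k : ℝ) * s) * N (f k))
  else (∑' k : ℕ, ENNReal.ofReal ((2 : ℝ) ^ ((k : ℝ) * s) * N (f k)) ^ q.toReal) ^ (1 / q.toReal)

/-- Membership in `Σ^s_q(E)`: finiteness of the norm when `q < ∞`, and
`2^{ks}‖f_k‖_E → 0` when `q = ∞`. -/
def memSigma {E : Type*} (N : E → ℝ) (s : ℝ) (q : ℝ≥0∞) (f : ℕ → E) : Prop :=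
  if q = ⊤ then Tendsto (fun k : ℕ => (2 : ℝ) ^ ((k : ℝ) * s) * N (f k)) atTop (nhds 0)
  else sigmaNorm N s q f < ⊤

/-- Friedrichs smoothing operator `S_n`: truncation of a sequence after index `n`. -/
def smoothS {E : Type*} [Zero E] (n : ℕ) (f : ℕ → E) : ℕ → E :=
  fun k => if k ≤ n then f k else 0


namespace ICB

noncomputable def lq (q : ℝ≥0∞) (u : ℕ → ℝ≥0∞) : ℝ≥0∞ :=
  if q = ⊤ then ⨆ k : ℕ, u k else (∑' k : ℕ, u k ^ q.toReal) ^ (1 / q.toReal)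

variable {q : ℝ≥0∞} {u v : ℕ → ℝ≥0∞}

lemma alpha_one_le (hq : 1 ≤ q) (hq' : q ≠ ⊤) : 1 ≤ q.toReal := by
  have := ENNReal.toReal_mono hq' hq
  simpa using this

lemma alpha_pos (hq : 1 ≤ q) (hq' : q ≠ ⊤) : 0 < q.toReal :=
  lt_of_lt_of_le one_pos (alpha_one_le hq hq')

lemma lq_one (u : ℕ → ℝ≥0∞) : lq 1 u = ∑' k, u k := by
  simp [lq, ENNReal.toReal_one]

lemma lq_mono (h : ∀ k, u k ≤ v k) : lq q u ≤ lq q v := by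
  unfold lq
  split
  · exact iSup_mono h
  · exact ENNReal.rpow_le_rpow
      (ENNReal.tsum_le_tsum fun k => ENNReal.rpow_le_rpow (h k) ENNReal.toReal_nonneg)
      (by positivity)

lemma le_lq (hq : 1 ≤ q) (u : ℕ → ℝ≥0∞) (k : ℕ) : u k ≤ lq q u := by
  unfold lq
  split
  · exact le_iSup u k
  · rename_i hq'
    have hα : 0 < q.toReal := alpha_pos hq hq'
    have : u k = (u k ^ q.toReal) ^ (1 / q.toReal) := by
      rw [← ENNReal.rpow_mul, mul_one_div_cancel hα.ne', ENNReal.rpow_one]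
    rw [this]
    exact ENNReal.rpow_le_rpow (ENNReal.le_tsum k) (by positivity)

lemma tsum_rpow_le {α : ℝ} (hα : 1 ≤ α) : (∑' k, u k ^ α) ≤ (∑' k, u k) ^ α := by
  have hα0 : 0 < α := lt_of_lt_of_le one_pos hα
  set S := ∑' k, u k with hS
  rcases eq_or_ne S 0 with h0 | h0
  · have hu : ∀ k, u k = 0 := by
      intro k
      exact le_antisymm (h0 ▸ ENNReal.le_tsum k) (zero_le)
    simp [hu, ENNReal.zero_rpow_of_pos hα0]
  rcases eq_or_ne S ⊤ with ht | ht
  · rw [ht, ENNReal.top_rpow_of_pos hα0]; exact le_top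
  have step : ∀ k, u k ^ α ≤ u k * S ^ (α - 1) := by
    intro k
    rcases eq_or_ne (u k) 0 with h | h
    · simp [h, ENNReal.zero_rpow_of_pos hα0]
    · have hkt : u k ≠ ⊤ := ne_top_of_le_ne_top ht (ENNReal.le_tsum k)
      have : u k ^ α = u k ^ (1:ℝ) * u k ^ (α - 1) := by
        rw [← ENNReal.rpow_add _ _ h hkt]; ring_nf
      rw [this, ENNReal.rpow_one]
      exact mul_le_mul_right (ENNReal.rpow_le_rpow (ENNReal.le_tsum k) (by linarith)) _
  calc (∑' k, u k ^ α) ≤ ∑' k, u k * S ^ (α - 1) := ENNReal.tsum_le_tsum step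
    _ = S * S ^ (α - 1) := by rw [ENNReal.tsum_mul_right]
    _ = S ^ (1:ℝ) * S ^ (α - 1) := by rw [ENNReal.rpow_one]
    _ = S ^ α := by rw [← ENNReal.rpow_add _ _ h0 ht]; ring_nf

lemma lq_le_tsum (hq : 1 ≤ q) (u : ℕ → ℝ≥0∞) : lq q u ≤ ∑' k, u k := by
  unfold lq
  split
  · exact iSup_le fun k => ENNReal.le_tsum k
  · rename_i hq'
    have hα : 0 < q.toReal := alpha_pos hq hq'
    calc (∑' k, u k ^ q.toReal) ^ (1 / q.toReal)
        ≤ ((∑' k, u k) ^ q.toReal) ^ (1 / q.toReal) :=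
          ENNReal.rpow_le_rpow (tsum_rpow_le (alpha_one_le hq hq')) (by positivity)
      _ = ∑' k, u k := by
          rw [← ENNReal.rpow_mul, mul_one_div_cancel hα.ne', ENNReal.rpow_one]

lemma lq_add_le (hq : 1 ≤ q) (u v : ℕ → ℝ≥0∞) :
    lq q (fun k => u k + v k) ≤ lq q u + lq q v := by
  unfold lq
  split
  · exact iSup_le fun k => add_le_add (le_iSup u k) (le_iSup v k)
  · rename_i hq'
    have h := ENNReal.lintegral_Lp_add_le
      (μ := MeasureTheory.Measure.count (α := ℕ))
      (f := u) (g := v)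
      ((measurable_of_countable u).aemeasurable) ((measurable_of_countable v).aemeasurable)
      (alpha_one_le hq hq')
    simpa [MeasureTheory.lintegral_count, Pi.add_apply] using h

lemma lq_const_mul (hq : 1 ≤ q) (c : ℝ≥0∞) (u : ℕ → ℝ≥0∞) :
    lq q (fun k => c * u k) = c * lq q u := by
  unfold lq
  split
  · exact (ENNReal.mul_iSup c u).symm
  · rename_i hq'
    have hα : 0 < q.toReal := alpha_pos hq hq'
    have h1 : ∀ k, (c * u k) ^ q.toReal = c ^ q.toReal * u k ^ q.toReal := fun k =>
      ENNReal.mul_rpow_of_nonneg _ _ hα.le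
    simp only [h1]
    rw [ENNReal.tsum_mul_left, ENNReal.mul_rpow_of_nonneg _ _ (by positivity : (0:ℝ) ≤ 1 / q.toReal),
      ← ENNReal.rpow_mul, mul_one_div_cancel hα.ne', ENNReal.rpow_one]


noncomputable def ker (t : ℝ≥0∞) (k j : ℕ) : ℝ≥0∞ := t ^ (k - j) * t ^ (j - k)

noncomputable def convK (t : ℝ≥0∞) (a : ℕ → ℝ≥0∞) (k : ℕ) : ℝ≥0∞ :=
  ∑' j, ker t k j * a j

variable {t : ℝ≥0∞} {a b : ℕ → ℝ≥0∞}

lemma ker_left {k j : ℕ} (h : j ≤ k) : ker t k j = t ^ (k - j) := by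
  simp [ker, Nat.sub_eq_zero_of_le h]

lemma ker_right {k j : ℕ} (h : k ≤ j) : ker t k j = t ^ (j - k) := by
  simp [ker, Nat.sub_eq_zero_of_le h]

lemma ker_ne_zero (ht0 : t ≠ 0) (k j : ℕ) : ker t k j ≠ 0 := by
  simp [ker, pow_ne_zero, ht0]

lemma ker_ne_top (ht : t ≠ ⊤) (k j : ℕ) : ker t k j ≠ ⊤ := by
  exact ENNReal.mul_ne_top (ENNReal.pow_ne_top ht) (ENNReal.pow_ne_top ht)

lemma tsum_nat_split (f : ℕ → ℝ≥0∞) (k : ℕ) :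
    ∑' j, f j = ∑ j ∈ Finset.range k, f j + ∑' i, f (i + k) :=
  ((ENNReal.summable (f := fun n => f (n + k))).hasSum.sum_range_add).tsum_eq

lemma ker_row_sum (ht1 : t < 1) (k : ℕ) : ∑' j, ker t k j ≤ 2 * (1 - t)⁻¹ := by
  have key := tsum_nat_split (fun j => ker t k j) (k + 1)
  have h1 : ∑ j ∈ Finset.range (k + 1), ker t k j ≤ (1 - t)⁻¹ := by
    have e1 : ∀ j ∈ Finset.range (k + 1), ker t k j = t ^ (k - j) := fun j hj =>
      ker_left (by simp only [Finset.mem_range] at hj; omega)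
    rw [Finset.sum_congr rfl e1, ← Finset.sum_range_reflect (fun i => t ^ (k - i)) (k + 1)]
    calc ∑ j ∈ Finset.range (k + 1), t ^ (k - (k + 1 - 1 - j))
        ≤ ∑ j ∈ Finset.range (k + 1), t ^ j := by
          apply Finset.sum_le_sum
          intro i hi
          have e : k - (k + 1 - 1 - i) = i := by
            simp only [Finset.mem_range] at hi; omega
          rw [e]
      _ ≤ ∑' j, t ^ j := ENNReal.sum_le_tsum _
      _ = (1 - t)⁻¹ := ENNReal.tsum_geometric t
  have h2 : ∑' i, ker t k (i + (k + 1)) ≤ (1 - t)⁻¹ := by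
    calc ∑' i, ker t k (i + (k + 1))
        = ∑' i, t ^ (i + 1) := by
          congr 1; funext i
          rw [ker_right (by omega : k ≤ i + (k + 1))]
          congr 1; omega
      _ ≤ ∑' i, t ^ i := ENNReal.tsum_le_tsum fun i => by
          rw [pow_succ]
          exact mul_le_of_le_one_right' ht1.le
      _ = (1 - t)⁻¹ := ENNReal.tsum_geometric t
  calc ∑' j, ker t k j = ∑ j ∈ Finset.range (k + 1), ker t k j + ∑' i, ker t k (i + (k + 1)) :=
        key
    _ ≤ (1 - t)⁻¹ + (1 - t)⁻¹ := add_le_add h1 h2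
    _ = 2 * (1 - t)⁻¹ := (two_mul _).symm

lemma ker_col_sum (ht1 : t < 1) (j : ℕ) : ∑' k, ker t k j ≤ 2 * (1 - t)⁻¹ := by
  have e : ∀ k, ker t k j = ker t j k := fun k => mul_comm _ _
  simp only [e]
  exact ker_row_sum ht1 j

lemma Sconst_ne_top (ht1 : t < 1) : (2 : ℝ≥0∞) * (1 - t)⁻¹ ≠ ⊤ := by
  apply ENNReal.mul_ne_top (by norm_num)
  rw [ENNReal.inv_ne_top]
  intro h
  exact absurd ht1 (not_lt.mpr (tsub_eq_zero_iff_le.mp h))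

lemma Sconst_ne_zero : (2 : ℝ≥0∞) * (1 - t)⁻¹ ≠ 0 := by
  apply mul_ne_zero (by norm_num)
  simp only [ne_eq, ENNReal.inv_eq_zero]
  exact (lt_of_le_of_lt tsub_le_self (by norm_num : (1:ℝ≥0∞) < ⊤)).ne

lemma conv_mono (h : ∀ j, a j ≤ b j) (k : ℕ) : convK t a k ≤ convK t b k :=
  ENNReal.tsum_le_tsum fun j => mul_le_mul_right (h j) _

lemma conv_add (k : ℕ) : convK t (fun j => a j + b j) k = convK t a k + convK t b k := by
  unfold convK
  rw [← ENNReal.tsum_add]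
  congr 1; funext j; ring

/-- per-`k` bound by the `ℓ^q` norm. -/
lemma conv_le {q : ℝ≥0∞} (hq : 1 ≤ q) (ht1 : t < 1) (a : ℕ → ℝ≥0∞) (k : ℕ) :
    convK t a k ≤ 2 * (1 - t)⁻¹ * lq q a := by
  calc convK t a k ≤ ∑' j, ker t k j * lq q a :=
        ENNReal.tsum_le_tsum fun j => mul_le_mul_right (le_lq hq a j) _
    _ = (∑' j, ker t k j) * lq q a := ENNReal.tsum_mul_right
    _ ≤ 2 * (1 - t)⁻¹ * lq q a := mul_le_mul_left (ker_row_sum ht1 k) _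

/-- decay of convolution of truncated data. -/
lemma conv_trunc {q : ℝ≥0∞} (hq : 1 ≤ q) (ht1 : t < 1) (a : ℕ → ℝ≥0∞) {m k : ℕ} (hmk : m ≤ k) :
    convK t (fun j => if j ≤ m then a j else 0) k
      ≤ t ^ (k - m) * (2 * (1 - t)⁻¹ * lq q a) := by
  have h1 : ∀ j, ker t k j * (if j ≤ m then a j else 0)
      ≤ t ^ (k - m) * (ker t m j * a j) := by
    intro j
    by_cases hj : j ≤ m
    · simp only [if_pos hj]
      rw [ker_left (le_trans hj hmk), ker_left hj, ← mul_assoc, ← pow_add]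
      have e : k - m + (m - j) = k - j := by omega
      rw [e]
    · simp [if_neg hj]
  calc convK t (fun j => if j ≤ m then a j else 0) k
        ≤ ∑' j, t ^ (k - m) * (ker t m j * a j) := ENNReal.tsum_le_tsum h1
    _ = t ^ (k - m) * convK t a m := ENNReal.tsum_mul_left
    _ ≤ t ^ (k - m) * (2 * (1 - t)⁻¹ * lq q a) :=
        mul_le_mul_right (conv_le hq ht1 a m) _

/-- Schur / Young: the convolution is bounded on `ℓ^q`. -/
lemma lq_conv_le {q : ℝ≥0∞} (hq : 1 ≤ q) (ht0 : t ≠ 0) (ht1 : t < 1) (a : ℕ → ℝ≥0∞) :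
    lq q (convK t a) ≤ 2 * (1 - t)⁻¹ * lq q a := by
  have htt : t ≠ ⊤ := (lt_of_lt_of_le ht1 le_top).ne
  set S : ℝ≥0∞ := 2 * (1 - t)⁻¹ with hS
  have hS0 : S ≠ 0 := Sconst_ne_zero
  have hSt : S ≠ ⊤ := Sconst_ne_top ht1
  by_cases hq' : q = ⊤
  · subst hq'
    simp only [lq, if_pos rfl]
    refine iSup_le fun k => ?_
    have h := conv_le (q := (⊤ : ℝ≥0∞)) le_top ht1 a k
    simpa [lq] using h
  by_cases hq1 : q = 1
  · subst hq1
    rw [lq_one, lq_one]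
    calc ∑' k, convK t a k = ∑' k, ∑' j, ker t k j * a j := rfl
      _ = ∑' j, ∑' k, ker t k j * a j := ENNReal.tsum_comm
      _ = ∑' j, (∑' k, ker t k j) * a j := by
          congr 1; funext j; rw [ENNReal.tsum_mul_right]
      _ ≤ ∑' j, S * a j := ENNReal.tsum_le_tsum fun j =>
          mul_le_mul_left (ker_col_sum ht1 j) _
      _ = S * ∑' j, a j := ENNReal.tsum_mul_left
  -- now 1 < q < ⊤
  have hα1 : 1 < q.toReal := by
    rcases lt_or_eq_of_le (alpha_one_le hq hq') with h | h
    · exact h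
    · exact absurd ((ENNReal.toReal_eq_one_iff q).mp h.symm) hq1
  set α := q.toReal with hα
  have hα0 : (0:ℝ) < α := by linarith
  set β := α / (α - 1) with hβ
  have hconj : α.HolderConjugate β := Real.HolderConjugate.conjExponent hα1
  have hβ0 : (0:ℝ) < β := hconj.symm.pos
  have hker1 : ∀ k j, (ker t k j ^ (1/β : ℝ)) ^ (β : ℝ) = ker t k j := by
    intro k j
    rw [← ENNReal.rpow_mul, one_div_mul_cancel hβ0.ne', ENNReal.rpow_one]
  have hkerα : ∀ k j, (ker t k j ^ (1/α : ℝ)) ^ (α : ℝ) = ker t k j := by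
    intro k j
    rw [← ENNReal.rpow_mul, one_div_mul_cancel hα0.ne', ENNReal.rpow_one]
  have holder : ∀ k, convK t a k ≤ S ^ (1/β : ℝ) * (∑' j, ker t k j * a j ^ α) ^ (1/α : ℝ) := by
    intro k
    have h := ENNReal.lintegral_mul_le_Lp_mul_Lq
      (μ := MeasureTheory.Measure.count (α := ℕ)) hconj.symm
      (f := fun j => ker t k j ^ (1/β : ℝ)) (g := fun j => ker t k j ^ (1/α : ℝ) * a j)
      ((measurable_of_countable _).aemeasurable) ((measurable_of_countable _).aemeasurable)
    simp only [MeasureTheory.lintegral_count, Pi.mul_apply] at h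
    have hfg : ∀ j, ker t k j ^ (1/β : ℝ) * (ker t k j ^ (1/α : ℝ) * a j) = ker t k j * a j := by
      intro j
      rw [← mul_assoc, ← ENNReal.rpow_add _ _ (ker_ne_zero ht0 k j) (ker_ne_top htt k j),
        one_div, one_div, add_comm, hconj.inv_add_inv_eq_one, ENNReal.rpow_one]
    have hg : ∀ j, (ker t k j ^ (1/α : ℝ) * a j) ^ (α : ℝ) = ker t k j * a j ^ α := by
      intro j
      rw [ENNReal.mul_rpow_of_nonneg _ _ hα0.le, hkerα]
    simp only [hfg, hkerα, hker1, hg] at h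
    calc convK t a k = ∑' j, ker t k j * a j := rfl
      _ ≤ (∑' j, ker t k j) ^ (1/β : ℝ) * (∑' j, ker t k j * a j ^ α) ^ (1/α : ℝ) := h
      _ ≤ S ^ (1/β : ℝ) * (∑' j, ker t k j * a j ^ α) ^ (1/α : ℝ) :=
          mul_le_mul_left (ENNReal.rpow_le_rpow (ker_row_sum ht1 k) (by positivity)) _
  have step2 : (∑' k, convK t a k ^ α) ≤ S ^ ((1/β) * α : ℝ) * (S * ∑' j, a j ^ α) := by
    calc (∑' k, convK t a k ^ α)
        ≤ ∑' k, (S ^ (1/β : ℝ) * (∑' j, ker t k j * a j ^ α) ^ (1/α : ℝ)) ^ α :=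
          ENNReal.tsum_le_tsum fun k => ENNReal.rpow_le_rpow (holder k) hα0.le
      _ = ∑' k, S ^ ((1/β) * α : ℝ) * ∑' j, ker t k j * a j ^ α := by
          congr 1; funext k
          rw [ENNReal.mul_rpow_of_nonneg _ _ hα0.le, ← ENNReal.rpow_mul,
            ← ENNReal.rpow_mul, one_div_mul_cancel hα0.ne', ENNReal.rpow_one]
      _ = S ^ ((1/β) * α : ℝ) * ∑' k, ∑' j, ker t k j * a j ^ α := ENNReal.tsum_mul_left
      _ ≤ S ^ ((1/β) * α : ℝ) * (S * ∑' j, a j ^ α) := by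
          apply mul_le_mul_right
          calc ∑' k, ∑' j, ker t k j * a j ^ α
              = ∑' j, ∑' k, ker t k j * a j ^ α := ENNReal.tsum_comm
            _ = ∑' j, (∑' k, ker t k j) * a j ^ α := by
                congr 1; funext j; rw [ENNReal.tsum_mul_right]
            _ ≤ ∑' j, S * a j ^ α := ENNReal.tsum_le_tsum fun j =>
                mul_le_mul_left (ker_col_sum ht1 j) _
            _ = S * ∑' j, a j ^ α := ENNReal.tsum_mul_left
  have hfin : lq q (convK t a) = (∑' k, convK t a k ^ α) ^ (1/α : ℝ) := by
    simp only [lq, if_neg hq']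
    rfl
  rw [hfin]
  calc (∑' k, convK t a k ^ α) ^ (1/α : ℝ)
      ≤ (S ^ ((1/β) * α : ℝ) * (S * ∑' j, a j ^ α)) ^ (1/α : ℝ) :=
        ENNReal.rpow_le_rpow step2 (by positivity)
    _ = S ^ (1/β : ℝ) * S ^ (1/α : ℝ) * (∑' j, a j ^ α) ^ (1/α : ℝ) := by
        rw [ENNReal.mul_rpow_of_nonneg _ _ (by positivity : (0:ℝ) ≤ 1/α),
          ENNReal.mul_rpow_of_nonneg _ _ (by positivity : (0:ℝ) ≤ 1/α),
          ← ENNReal.rpow_mul, ← mul_assoc]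
        congr 2
        · congr 1
          field_simp
    _ = S * (∑' j, a j ^ α) ^ (1/α : ℝ) := by
        rw [← ENNReal.rpow_add _ _ hS0 hSt, one_div, one_div, add_comm,
          hconj.inv_add_inv_eq_one, ENNReal.rpow_one]
    _ = S * lq q a := by
        congr 1
        simp only [lq, if_neg hq']
        rfl


noncomputable def aSeq {E : Type*} (N : E → ℝ) (s : ℝ) (f : ℕ → E) : ℕ → ℝ≥0∞ :=
  fun k => ENNReal.ofReal ((2 : ℝ) ^ ((k : ℝ) * s) * N (f k))

variable {E : Type*} {N : E → ℝ} {s : ℝ} {q : ℝ≥0∞} {f : ℕ → E}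

lemma sigmaNorm_eq (N : E → ℝ) (s : ℝ) (q : ℝ≥0∞) (f : ℕ → E) :
    sigmaNorm N s q f = lq q (aSeq N s f) := rfl

lemma memSigma_lt_top (hq' : q ≠ ⊤) (h : memSigma N s q f) : sigmaNorm N s q f < ⊤ := by
  simpa [memSigma, if_neg hq'] using h

lemma memSigma_of_lt_top (hq' : q ≠ ⊤) (h : sigmaNorm N s q f < ⊤) : memSigma N s q f := by
  simpa [memSigma, if_neg hq'] using h

lemma memSigma_top_tendsto (h : memSigma N s ⊤ f) :
    Tendsto (fun k : ℕ => (2 : ℝ) ^ ((k : ℝ) * s) * N (f k)) atTop (nhds 0) := by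
  simpa [memSigma] using h

lemma aSeq_shift (N : E → ℝ) (s' s : ℝ) (f : ℕ → E) (k : ℕ) :
    aSeq N s' f k = ENNReal.ofReal ((2 : ℝ) ^ ((k : ℝ) * (s' - s))) * aSeq N s f k := by
  unfold aSeq
  rw [← ENNReal.ofReal_mul (by positivity)]
  congr 1
  rw [← mul_assoc, ← Real.rpow_add two_pos]
  congr 1
  ring

section Trunc
variable [AddCommGroup E]

lemma aSeq_smoothS (hN0 : N 0 = 0) (n : ℕ) (f : ℕ → E) (k : ℕ) :
    aSeq N s (smoothS n f) k = if k ≤ n then aSeq N s f k else 0 := by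
  unfold aSeq smoothS
  split
  · rfl
  · simp [hN0]

lemma smoothS_succ_sub (f : ℕ → E) (n k : ℕ) :
    (smoothS (n + 1) f - smoothS n f) k = if k = n + 1 then f (n + 1) else 0 := by
  simp only [Pi.sub_apply, smoothS]
  by_cases h1 : k ≤ n
  · rw [if_pos (by omega : k ≤ n + 1), if_pos h1, if_neg (by omega : ¬ k = n + 1), sub_self]
  by_cases h2 : k = n + 1
  · rw [if_pos (by omega : k ≤ n + 1), if_neg h1, if_pos h2, sub_zero, h2]
  · rw [if_neg (by omega : ¬ k ≤ n + 1), if_neg h1, if_neg h2, sub_self]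

lemma sub_smoothS (f : ℕ → E) (n k : ℕ) :
    (smoothS n f - f) k = if k ≤ n then 0 else -(f k) := by
  simp only [Pi.sub_apply, smoothS]
  split
  · rw [sub_self]
  · rw [zero_sub]

lemma aSeq_sub_smoothS (hN0 : N 0 = 0) (hNneg : ∀ x, N (-x) = N x) (n : ℕ) (f : ℕ → E) (k : ℕ) :
    aSeq N s (smoothS n f - f) k = if k ≤ n then 0 else aSeq N s f k := by
  unfold aSeq
  rw [sub_smoothS]
  split
  · simp [hN0]
  · rw [hNneg]

lemma aSeq_succ_sub (hN0 : N 0 = 0) (n : ℕ) (f : ℕ → E) (k : ℕ) :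
    aSeq N s (smoothS (n + 1) f - smoothS n f) k
      = if k = n + 1 then aSeq N s f (n + 1) else 0 := by
  unfold aSeq
  rw [smoothS_succ_sub]
  split
  · rename_i h; rw [h]
  · simp [hN0]

lemma sigmaNorm_one_succ_sub (hN0 : N 0 = 0) (n : ℕ) (f : ℕ → E) :
    sigmaNorm N s 1 (smoothS (n + 1) f - smoothS n f) = aSeq N s f (n + 1) := by
  rw [sigmaNorm_eq, lq_one]
  have h : ∀ k, aSeq N s (smoothS (n + 1) f - smoothS n f) k
      = if k = n + 1 then aSeq N s f (n + 1) else 0 := aSeq_succ_sub hN0 n f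
  rw [tsum_congr h, tsum_ite_eq]

lemma sigmaNorm_one_smoothS (hN0 : N 0 = 0) (n : ℕ) (f : ℕ → E) :
    sigmaNorm N s 1 (smoothS n f) = ∑ j ∈ Finset.range (n + 1), aSeq N s f j := by
  rw [sigmaNorm_eq, lq_one]
  rw [tsum_eq_sum (s := Finset.range (n + 1))
    (fun b hb => by rw [aSeq_smoothS hN0, if_neg (by simp only [Finset.mem_range] at hb; omega)])]
  exact Finset.sum_congr rfl fun j hj => by
    rw [aSeq_smoothS hN0, if_pos (by simp only [Finset.mem_range] at hj; omega)]

lemma memSigma_one_smoothS (hN0 : N 0 = 0) (n : ℕ) (f : ℕ → E) (σ : ℝ) :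
    memSigma N σ 1 (smoothS n f) := by
  apply memSigma_of_lt_top ENNReal.one_ne_top
  rw [sigmaNorm_one_smoothS hN0]
  rw [ENNReal.sum_lt_top]
  intro j _
  exact ENNReal.ofReal_lt_top

lemma sigmaNorm_smoothS_le (hN0 : N 0 = 0) (n : ℕ) (f : ℕ → E) :
    sigmaNorm N s q (smoothS n f) ≤ sigmaNorm N s q f := by
  rw [sigmaNorm_eq, sigmaNorm_eq]
  apply lq_mono
  intro k
  rw [aSeq_smoothS hN0]
  split
  · exact le_rfl
  · exact zero_le

lemma memSigma_smoothS (hN0 : N 0 = 0) (n : ℕ) (h : memSigma N s q f) :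
    memSigma N s q (smoothS n f) := by
  by_cases hq' : q = ⊤
  · subst hq'
    simp only [memSigma, if_pos rfl]
    apply tendsto_const_nhds.congr'
    filter_upwards [Filter.eventually_ge_atTop (n + 1)] with k hk
    have : ¬ k ≤ n := by omega
    simp [smoothS, this, hN0]
  · exact memSigma_of_lt_top hq'
      (lt_of_le_of_lt (sigmaNorm_smoothS_le hN0 n f) (memSigma_lt_top hq' h))

end Trunc

/-- smallness of tails. -/
lemma tail_small (hq : 1 ≤ q) (hmem : memSigma N s q f) (hfin : sigmaNorm N s q f < ⊤) :
    ∀ η : ℝ≥0∞, 0 < η → ∃ m, lq q (fun k => if k ≤ m then 0 else aSeq N s f k) < η := by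
  intro η hη
  have htail_le : ∀ m, lq q (fun k => if k ≤ m then 0 else aSeq N s f k)
      ≤ sigmaNorm N s q f := by
    intro m
    rw [sigmaNorm_eq]
    apply lq_mono
    intro k
    split
    · exact zero_le
    · exact le_rfl
  by_cases hηt : η = ⊤
  · exact ⟨0, lt_of_le_of_lt (htail_le 0) (by rw [hηt]; exact hfin)⟩
  by_cases hq' : q = ⊤
  · subst hq'
    have htd := memSigma_top_tendsto hmem
    have h0 : 0 < η.toReal := ENNReal.toReal_pos hη.ne' hηt
    have hev := htd.eventually_lt_const (by positivity : (0:ℝ) < η.toReal / 2)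
    obtain ⟨m, hm⟩ := eventually_atTop.mp hev
    refine ⟨m, ?_⟩
    have hlq : lq ⊤ (fun k => if k ≤ m then 0 else aSeq N s f k)
        = ⨆ k, (if k ≤ m then 0 else aSeq N s f k) := by simp [lq]
    rw [hlq]
    have hub : ∀ k, (if k ≤ m then 0 else aSeq N s f k) ≤ ENNReal.ofReal (η.toReal / 2) := by
      intro k
      split
      · exact zero_le
      · rename_i hk
        exact ENNReal.ofReal_le_ofReal (hm k (by omega)).le
    calc ⨆ k, (if k ≤ m then 0 else aSeq N s f k) ≤ ENNReal.ofReal (η.toReal / 2) :=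
          iSup_le hub
      _ < ENNReal.ofReal η.toReal := (ENNReal.ofReal_lt_ofReal_iff h0).mpr (half_lt_self h0)
      _ = η := ENNReal.ofReal_toReal hηt
  · have hα : 0 < q.toReal := alpha_pos hq hq'
    have hT : (∑' k, aSeq N s f k ^ q.toReal) ≠ ⊤ := by
      intro hT
      rw [sigmaNorm_eq] at hfin
      unfold lq at hfin
      rw [if_neg hq', hT, ENNReal.top_rpow_of_pos (by positivity)] at hfin
      exact absurd hfin (lt_irrefl _)
    have htd := ENNReal.tendsto_sum_nat_add (fun k => aSeq N s f k ^ q.toReal) hT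
    have hpow_pos : 0 < η ^ q.toReal := ENNReal.rpow_pos hη hηt
    obtain ⟨m, hm⟩ := eventually_atTop.mp (htd.eventually_lt_const hpow_pos)
    refine ⟨m, ?_⟩
    have hlq : lq q (fun k => if k ≤ m then 0 else aSeq N s f k)
        = (∑' k, (if k ≤ m then 0 else aSeq N s f k) ^ q.toReal) ^ (1 / q.toReal) := by
      simp only [lq, if_neg hq']
    rw [hlq]
    have hsum : (∑' k, (if k ≤ m then 0 else aSeq N s f k) ^ q.toReal)
        = ∑' i, aSeq N s f (i + (m + 1)) ^ q.toReal := by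
      rw [tsum_nat_split (fun k => (if k ≤ m then 0 else aSeq N s f k) ^ q.toReal) (m + 1)]
      have h1 : ∑ j ∈ Finset.range (m + 1), (if j ≤ m then 0 else aSeq N s f j) ^ q.toReal
          = 0 := Finset.sum_eq_zero fun j hj => by
        rw [if_pos (by simp only [Finset.mem_range] at hj; omega),
          ENNReal.zero_rpow_of_pos hα]
      rw [h1, zero_add]
      congr 1
      funext i
      rw [if_neg (by omega)]
    rw [hsum]
    calc (∑' i, aSeq N s f (i + (m + 1)) ^ q.toReal) ^ (1 / q.toReal)
        < (η ^ q.toReal) ^ (1 / q.toReal) :=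
          ENNReal.rpow_lt_rpow (hm (m + 1) (by omega)) (by positivity)
      _ = η := by rw [← ENNReal.rpow_mul, mul_one_div_cancel hα.ne', ENNReal.rpow_one]

/-- choose a real δ with `ofReal δ * B < e`. -/
lemma exists_ofReal_mul_lt (B : ℝ≥0∞) (hB : B ≠ ⊤) {e : ℝ≥0∞} (he : 0 < e) :
    ∃ δ : ℝ, 0 < δ ∧ ENNReal.ofReal δ * B < e := by
  by_cases hB0 : B = 0
  · exact ⟨1, one_pos, by rw [hB0, mul_zero]; exact he⟩
  by_cases het : e = ⊤
  · refine ⟨1, one_pos, ?_⟩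
    rw [het, lt_top_iff_ne_top]
    exact ENNReal.mul_ne_top ENNReal.ofReal_ne_top hB
  have hx0 : 0 < e / B := ENNReal.div_pos he.ne' hB
  have hxt : e / B ≠ ⊤ := by
    intro h
    rw [ENNReal.div_eq_top] at h
    rcases h with ⟨_, h2⟩ | ⟨h1, _⟩
    · exact hB0 h2
    · exact het h1
  refine ⟨(e / B).toReal / 2, half_pos (ENNReal.toReal_pos hx0.ne' hxt), ?_⟩
  · rw [← ENNReal.lt_div_iff_mul_lt (Or.inl hB0) (Or.inl hB)]
    calc ENNReal.ofReal ((e / B).toReal / 2) < ENNReal.ofReal (e / B).toReal := by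
          rw [ENNReal.ofReal_lt_ofReal_iff (ENNReal.toReal_pos hx0.ne' hxt)]
          exact half_lt_self (ENNReal.toReal_pos hx0.ne' hxt)
      _ = e / B := ENNReal.ofReal_toReal hxt

lemma lq_geom_tail {t : ℝ≥0∞} (hq : 1 ≤ q) (c : ℝ≥0∞) {m K : ℕ} (hmK : m ≤ K) :
    lq q (fun k => if k ≤ K then 0 else t ^ (k - m) * c)
      ≤ t ^ (K + 1 - m) * ((1 - t)⁻¹ * c) := by
  refine le_trans (lq_le_tsum hq _) ?_
  rw [tsum_nat_split (fun k => if k ≤ K then 0 else t ^ (k - m) * c) (K + 1)]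
  have h1 : ∑ j ∈ Finset.range (K + 1), (if j ≤ K then 0 else t ^ (j - m) * c) = 0 :=
    Finset.sum_eq_zero fun j hj => by
      rw [if_pos (by simp only [Finset.mem_range] at hj; omega)]
  rw [h1, zero_add]
  have e1 : (∑' i : ℕ, if i + (K + 1) ≤ K then 0 else t ^ (i + (K + 1) - m) * c)
      = ∑' i : ℕ, t ^ (K + 1 - m) * (t ^ i * c) := by
    congr 1
    funext i
    rw [if_neg (by omega), ← mul_assoc, ← pow_add]
    congr 2
    omega
  have e2 : (∑' i : ℕ, t ^ (K + 1 - m) * (t ^ i * c))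
      = t ^ (K + 1 - m) * ((1 - t)⁻¹ * c) := by
    rw [ENNReal.tsum_mul_left, ← ENNReal.tsum_geometric t, ← ENNReal.tsum_mul_right]
  exact le_of_eq (e1.trans e2)

lemma conv_tail_small {t : ℝ≥0∞} (hq : 1 ≤ q) (ht0 : t ≠ 0) (ht1 : t < 1) (a : ℕ → ℝ≥0∞)
    (hA : lq q a < ⊤)
    (htail : ∀ η : ℝ≥0∞, 0 < η → ∃ m, lq q (fun k => if k ≤ m then 0 else a k) < η) :
    ∀ η : ℝ≥0∞, 0 < η → ∃ K, lq q (fun k => if k ≤ K then 0 else convK t a k) < η := by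
  intro η hη
  set S : ℝ≥0∞ := 2 * (1 - t)⁻¹ with hS
  have hS0 : S ≠ 0 := Sconst_ne_zero
  have hSt : S ≠ ⊤ := Sconst_ne_top ht1
  by_cases hηt : η = ⊤
  · refine ⟨0, ?_⟩
    subst hηt
    calc lq q (fun k => if k ≤ 0 then 0 else convK t a k) ≤ lq q (convK t a) :=
          lq_mono fun k => by split <;> [exact zero_le; exact le_rfl]
      _ ≤ S * lq q a := lq_conv_le hq ht0 ht1 a
      _ < ⊤ := ENNReal.mul_lt_top (lt_top_iff_ne_top.mpr hSt) hA
  obtain ⟨m, hm⟩ := htail ((η / 2) / S)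
    (ENNReal.div_pos (by simp [ENNReal.div_eq_top, hηt, hη.ne']) hSt)
  -- choose K
  have hgeom : Tendsto (fun n : ℕ => t ^ n * ((1 - t)⁻¹ * (S * lq q a))) atTop (nhds 0) := by
    have hconst : (1 - t)⁻¹ * (S * lq q a) ≠ ⊤ := by
      apply ENNReal.mul_ne_top
      · rw [ENNReal.inv_ne_top]
        intro h
        exact absurd ht1 (not_lt.mpr (tsub_eq_zero_iff_le.mp h))
      · exact ENNReal.mul_ne_top hSt hA.ne
    have := ENNReal.Tendsto.mul_const (ENNReal.tendsto_pow_atTop_nhds_zero_of_lt_one ht1)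
      (Or.inr hconst)
    simpa using this
  obtain ⟨n₀, hn₀⟩ := eventually_atTop.mp
    (hgeom.eventually_lt_const (ENNReal.div_pos hη.ne' (by norm_num) : 0 < η / 2))
  refine ⟨m + n₀, ?_⟩
  set K := m + n₀ with hK
  have hmK : m ≤ K := by omega
  -- pointwise split of a
  have hsplit : ∀ j, a j = (if j ≤ m then a j else 0) + (if j ≤ m then 0 else a j) := by
    intro j; split <;> simp
  have hpoint : ∀ k, (if k ≤ K then 0 else convK t a k)
      ≤ (if k ≤ K then 0 else convK t (fun j => if j ≤ m then a j else 0) k)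
        + convK t (fun j => if j ≤ m then 0 else a j) k := by
    intro k
    split
    · exact zero_le
    · calc convK t a k
          ≤ convK t (fun j => (if j ≤ m then a j else 0) + (if j ≤ m then 0 else a j)) k :=
            conv_mono (fun j => le_of_eq (hsplit j)) k
        _ = convK t (fun j => if j ≤ m then a j else 0) k
            + convK t (fun j => if j ≤ m then 0 else a j) k := conv_add k
  have hterm1 : lq q (fun k => if k ≤ K then 0
      else convK t (fun j => if j ≤ m then a j else 0) k) < η / 2 := by
    calc lq q (fun k => if k ≤ K then 0 else convK t (fun j => if j ≤ m then a j else 0) k)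
        ≤ lq q (fun k => if k ≤ K then 0 else t ^ (k - m) * (S * lq q a)) := by
          apply lq_mono
          intro k
          split
          · exact le_rfl
          · rename_i hk
            exact conv_trunc hq ht1 a (by omega)
      _ ≤ t ^ (K + 1 - m) * ((1 - t)⁻¹ * (S * lq q a)) := lq_geom_tail hq _ hmK
      _ < η / 2 := by
          have : K + 1 - m = n₀ + 1 := by omega
          rw [this]
          exact hn₀ (n₀ + 1) (by omega)
  have hterm2 : lq q (convK t (fun j => if j ≤ m then 0 else a j)) < η / 2 := by
    calc lq q (convK t (fun j => if j ≤ m then 0 else a j))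
        ≤ S * lq q (fun j => if j ≤ m then 0 else a j) := lq_conv_le hq ht0 ht1 _
      _ < S * ((η / 2) / S) := by
          rw [ENNReal.mul_lt_mul_iff_right hS0 hSt]
          exact hm
      _ ≤ η / 2 := ENNReal.mul_div_le
  calc lq q (fun k => if k ≤ K then 0 else convK t a k)
      ≤ lq q (fun k => (if k ≤ K then 0
          else convK t (fun j => if j ≤ m then a j else 0) k)
          + convK t (fun j => if j ≤ m then 0 else a j) k) := lq_mono hpoint
    _ ≤ lq q (fun k => if k ≤ K then 0
          else convK t (fun j => if j ≤ m then a j else 0) k)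
        + lq q (convK t (fun j => if j ≤ m then 0 else a j)) := lq_add_le hq _ _
    _ < η / 2 + η / 2 := ENNReal.add_lt_add hterm1 hterm2
    _ = η := ENNReal.add_halves η


end ICB

open ICB in
/-- Proposition 2.11: with `F` a Banach space, if `Φ : B_{s,q}(0,r) → Σ^{s₀}_∞(F)` is
continuous, satisfies the tame estimate, and satisfies the weak Lipschitz (contraction)
estimate only for smooth data `v, w ∈ Σ^∞_1(E) ∩ B_{s,q}(0,r)`, then `Φ(v) ∈ Σ^s_q(F)`
for all `v ∈ B_{s,q}(0,r)` and `Φ : B_{s,q}(0,r) → Σ^s_q(F)` is continuous. -/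
theorem interpolation_continuity_banach
    {E F : Type*} [AddCommGroup E] [Module ℝ E]
    [NormedAddCommGroup F] [NormedSpace ℝ F] [CompleteSpace F]
    (NE : E → ℝ) (hNE : IsPseudoNorm NE)
    (s₀ s s₁ : ℝ) (hs₀ : s₀ < s) (hs₁ : s < s₁)
    (q : ℝ≥0∞) (hq : 1 ≤ q) (r : ℝ) (hr : 0 < r)
    (Φ : (ℕ → E) → (ℕ → F))
    -- Φ maps the ball B_{s,q}(0,r) into Σ^{s₀}_∞(F)
    (hΦmem : ∀ v, memSigma NE s q v → sigmaNorm NE s q v < ENNReal.ofReal r →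
      memSigma (fun x : F => ‖x‖) s₀ ⊤ (Φ v))
    -- Φ is continuous from (B_{s,q}(0,r), ‖·‖_{Σ^s_q(E)}) to (Σ^{s₀}_∞(F), ‖·‖_{Σ^{s₀}_∞(F)})
    (hΦcont : ∀ f, memSigma NE s q f → sigmaNorm NE s q f < ENNReal.ofReal r →
      ∀ ε : ℝ, 0 < ε → ∃ δ : ℝ, 0 < δ ∧
        ∀ g, memSigma NE s q g → sigmaNorm NE s q g < ENNReal.ofReal r →
          sigmaNorm NE s q (g - f) < ENNReal.ofReal δ →
          sigmaNorm (fun x : F => ‖x‖) s₀ ⊤ (Φ g - Φ f) < ENNReal.ofReal ε)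
    -- weak contraction estimate for smooth data
    (C₀ : ℝ) (hC₀ : 0 < C₀)
    (hlip : ∀ v w, (∀ σ : ℝ, memSigma NE σ 1 v) → (∀ σ : ℝ, memSigma NE σ 1 w) →
      memSigma NE s q v → sigmaNorm NE s q v < ENNReal.ofReal r →
      memSigma NE s q w → sigmaNorm NE s q w < ENNReal.ofReal r →
      sigmaNorm (fun x : F => ‖x‖) s₀ ⊤ (Φ v - Φ w)
        ≤ ENNReal.ofReal C₀ * sigmaNorm NE s₀ 1 (v - w))
    -- tame estimate
    (C₁ : ℝ) (hC₁ : 0 < C₁)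
    (htame : ∀ v, (∀ σ : ℝ, memSigma NE σ 1 v) →
      memSigma NE s q v → sigmaNorm NE s q v < ENNReal.ofReal r →
      sigmaNorm (fun x : F => ‖x‖) s₁ ⊤ (Φ v) ≤ ENNReal.ofReal C₁ * sigmaNorm NE s₁ 1 v) :
    (∀ v, memSigma NE s q v → sigmaNorm NE s q v < ENNReal.ofReal r →
      memSigma (fun x : F => ‖x‖) s q (Φ v)) ∧
    (∀ f, memSigma NE s q f → sigmaNorm NE s q f < ENNReal.ofReal r →
      ∀ ε : ℝ, 0 < ε → ∃ δ : ℝ, 0 < δ ∧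
        ∀ g, memSigma NE s q g → sigmaNorm NE s q g < ENNReal.ofReal r →
          sigmaNorm NE s q (g - f) < ENNReal.ofReal δ →
          sigmaNorm (fun x : F => ‖x‖) s q (Φ g - Φ f) < ENNReal.ofReal ε) := by
  have hq0 : q ≠ 0 := (lt_of_lt_of_le zero_lt_one hq).ne'
  have hN0 : NE 0 = 0 := (hNE.eq_zero_iff 0).mpr rfl
  set θ : ℝ := min (s₁ - s) (s - s₀) with hθdef
  have hθ : 0 < θ := lt_min (by linarith) (by linarith)
  have hθ1 : θ ≤ s₁ - s := min_le_left _ _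
  have hθ0 : θ ≤ s - s₀ := min_le_right _ _
  set t : ℝ≥0∞ := ENNReal.ofReal ((2:ℝ) ^ (-θ)) with htdef
  have ht0 : t ≠ 0 := by
    rw [htdef, ne_eq, ENNReal.ofReal_eq_zero, not_le]
    positivity
  have ht1 : t < 1 := by
    rw [htdef, ENNReal.ofReal_lt_one]
    exact Real.rpow_lt_one_of_one_lt_of_neg one_lt_two (by linarith)
  have htt : t ≠ ⊤ := (lt_of_lt_of_le ht1 le_top).ne
  set S : ℝ≥0∞ := 2 * (1 - t)⁻¹ with hSdef
  have hS0 : S ≠ 0 := Sconst_ne_zero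
  have hSt : S ≠ ⊤ := Sconst_ne_top ht1
  set C' : ℝ≥0∞ := ENNReal.ofReal (C₀ + C₁) with hC'def
  have hC'0 : C' ≠ 0 := by
    rw [hC'def, ne_eq, ENNReal.ofReal_eq_zero, not_le]; linarith
  have hC't : C' ≠ ⊤ := ENNReal.ofReal_ne_top
  -- kernel comparison
  have hker_le : ∀ (σ : ℝ), θ ≤ σ → ∀ n : ℕ,
      ENNReal.ofReal ((2:ℝ) ^ (-((n:ℝ) * σ))) ≤ t ^ n := by
    intro σ hσ n
    rw [htdef, ← ENNReal.ofReal_pow (by positivity)]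
    apply ENNReal.ofReal_le_ofReal
    rw [← Real.rpow_natCast ((2:ℝ) ^ (-θ)) n, ← Real.rpow_mul (by norm_num : (0:ℝ) ≤ 2)]
    apply (Real.rpow_le_rpow_left_iff one_lt_two).mpr
    have hn : (0:ℝ) ≤ (n:ℝ) := Nat.cast_nonneg n
    nlinarith
  have hKB1 : ∀ k j : ℕ, j ≤ k →
      ENNReal.ofReal ((2:ℝ) ^ ((k:ℝ) * (s - s₁))) * ENNReal.ofReal ((2:ℝ) ^ ((j:ℝ) * (s₁ - s)))
        ≤ ker t k j := by
    intro k j hjk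
    rw [ker_left hjk, ← ENNReal.ofReal_mul (by positivity), ← Real.rpow_add two_pos]
    have he : (k:ℝ) * (s - s₁) + (j:ℝ) * (s₁ - s) = -(((k - j : ℕ):ℝ) * (s₁ - s)) := by
      rw [Nat.cast_sub hjk]; ring
    rw [he]
    exact hker_le (s₁ - s) hθ1 (k - j)
  have hKB2 : ∀ k j : ℕ, k ≤ j →
      ENNReal.ofReal ((2:ℝ) ^ ((k:ℝ) * (s - s₀))) * ENNReal.ofReal ((2:ℝ) ^ ((j:ℝ) * (s₀ - s)))
        ≤ ker t k j := by
    intro k j hkj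
    rw [ker_right hkj, ← ENNReal.ofReal_mul (by positivity), ← Real.rpow_add two_pos]
    have he : (k:ℝ) * (s - s₀) + (j:ℝ) * (s₀ - s) = -(((j - k : ℕ):ℝ) * (s - s₀)) := by
      rw [Nat.cast_sub hkj]; ring
    rw [he]
    exact hker_le (s - s₀) hθ0 (j - k)
  have hball : ∀ (v : ℕ → E) (n : ℕ), sigmaNorm NE s q v < ENNReal.ofReal r →
      sigmaNorm NE s q (smoothS n v) < ENNReal.ofReal r := fun v n hv =>
    lt_of_le_of_lt (sigmaNorm_smoothS_le hN0 n v) hv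
  -- THE KEY POINTWISE BOUND
  have key : ∀ v, memSigma NE s q v → sigmaNorm NE s q v < ENNReal.ofReal r →
      ∀ k : ℕ, aSeq (fun x : F => ‖x‖) s (Φ v) k ≤ C' * convK t (aSeq NE s v) k := by
    intro v hv hvr k
    apply ENNReal.le_of_forall_pos_le_add
    intro ε hε _
    have hck : (0:ℝ) < (2:ℝ) ^ ((k:ℝ) * (s - s₀)) := by positivity
    obtain ⟨δ, hδ, hclose⟩ := hΦcont v hv hvr ((ε : ℝ) / (2:ℝ) ^ ((k:ℝ) * (s - s₀)))
      (by positivity)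
    obtain ⟨m₀, hm₀⟩ := tail_small hq hv (hvr.trans_le le_top) (ENNReal.ofReal δ)
      (ENNReal.ofReal_pos.mpr hδ)
    set n := max m₀ k with hn
    have hkn : k ≤ n := le_max_right _ _
    set g := smoothS n v with hgdef
    have hg_mem : memSigma NE s q g := memSigma_smoothS hN0 n hv
    have hg_ball : sigmaNorm NE s q g < ENNReal.ofReal r := hball v n hvr
    have hgv : sigmaNorm NE s q (g - v) < ENNReal.ofReal δ := by
      rw [sigmaNorm_eq]
      refine lt_of_le_of_lt (lq_mono ?_) hm₀
      intro j
      rw [hgdef, aSeq_sub_smoothS hN0 hNE.neg n v j]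
      by_cases hjm : j ≤ m₀
      · rw [if_pos (le_trans hjm (le_max_left m₀ k)), if_pos hjm]
      · rw [if_neg hjm]
        split
        · exact zero_le
        · exact le_rfl
    have hΦg := hclose g hg_mem hg_ball hgv
    -- telescoping
    have htele : ∑ i ∈ Finset.range (n - k),
        (Φ (smoothS (k + (i + 1)) v) k - Φ (smoothS (k + i) v) k)
        = Φ g k - Φ (smoothS k v) k := by
      have h := Finset.sum_range_sub (fun i => Φ (smoothS (k + i) v) k) (n - k)
      simp only [Nat.add_sub_cancel' hkn, add_zero] at h
      exact h
    have hreal : ‖Φ v k‖ ≤ ‖Φ (smoothS k v) k‖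
        + (∑ i ∈ Finset.range (n - k),
            ‖Φ (smoothS (k + (i + 1)) v) k - Φ (smoothS (k + i) v) k‖)
        + ‖Φ g k - Φ v k‖ := by
      have hdecomp : Φ v k
          = Φ (smoothS k v) k + (Φ g k - Φ (smoothS k v) k) - (Φ g k - Φ v k) := by abel
      calc ‖Φ v k‖
          = ‖Φ (smoothS k v) k + (Φ g k - Φ (smoothS k v) k) - (Φ g k - Φ v k)‖ := by
            rw [← hdecomp]
        _ ≤ ‖Φ (smoothS k v) k + (Φ g k - Φ (smoothS k v) k)‖ + ‖Φ g k - Φ v k‖ :=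
            norm_sub_le _ _
        _ ≤ ‖Φ (smoothS k v) k‖ + ‖Φ g k - Φ (smoothS k v) k‖ + ‖Φ g k - Φ v k‖ :=
            add_le_add_left (norm_add_le _ _) _
        _ ≤ _ := by
            apply add_le_add_left
            apply add_le_add_right
            rw [← htele]
            exact norm_sum_le _ _
    -- pass to ℝ≥0∞
    have hsplit : aSeq (fun x : F => ‖x‖) s (Φ v) k
        ≤ ENNReal.ofReal ((2:ℝ) ^ ((k:ℝ) * s) * ‖Φ (smoothS k v) k‖)
          + (∑ i ∈ Finset.range (n - k), ENNReal.ofReal ((2:ℝ) ^ ((k:ℝ) * s)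
              * ‖Φ (smoothS (k + (i + 1)) v) k - Φ (smoothS (k + i) v) k‖))
          + ENNReal.ofReal ((2:ℝ) ^ ((k:ℝ) * s) * ‖Φ g k - Φ v k‖) := by
      have h1 : aSeq (fun x : F => ‖x‖) s (Φ v) k
          ≤ ENNReal.ofReal ((2:ℝ) ^ ((k:ℝ) * s) * (‖Φ (smoothS k v) k‖
            + (∑ i ∈ Finset.range (n - k),
                ‖Φ (smoothS (k + (i + 1)) v) k - Φ (smoothS (k + i) v) k‖)
            + ‖Φ g k - Φ v k‖)) := by
        apply ENNReal.ofReal_le_ofReal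
        exact mul_le_mul_of_nonneg_left hreal (by positivity)
      refine h1.trans (le_of_eq ?_)
      rw [mul_add, mul_add, ENNReal.ofReal_add (by positivity) (by positivity),
        ENNReal.ofReal_add, Finset.mul_sum,
        ENNReal.ofReal_sum_of_nonneg (fun i _ => by positivity)]
      · positivity
      · positivity
    -- term A
    have hTa : ENNReal.ofReal ((2:ℝ) ^ ((k:ℝ) * s) * ‖Φ (smoothS k v) k‖)
        ≤ ENNReal.ofReal C₁ * convK t (aSeq NE s v) k := by
      have h1 := htame (smoothS k v) (memSigma_one_smoothS hN0 k v)
        (memSigma_smoothS hN0 k hv) (hball v k hvr)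
      have h2 : aSeq (fun x : F => ‖x‖) s₁ (Φ (smoothS k v)) k
          ≤ sigmaNorm (fun x : F => ‖x‖) s₁ ⊤ (Φ (smoothS k v)) := by
        rw [sigmaNorm_eq]; exact le_lq le_top _ k
      have h3 : ENNReal.ofReal ((2:ℝ) ^ ((k:ℝ) * s) * ‖Φ (smoothS k v) k‖)
          = ENNReal.ofReal ((2:ℝ) ^ ((k:ℝ) * (s - s₁)))
            * aSeq (fun x : F => ‖x‖) s₁ (Φ (smoothS k v)) k := by
        rw [← aSeq_shift]; rfl
      rw [h3]
      calc ENNReal.ofReal ((2:ℝ) ^ ((k:ℝ) * (s - s₁)))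
            * aSeq (fun x : F => ‖x‖) s₁ (Φ (smoothS k v)) k
          ≤ ENNReal.ofReal ((2:ℝ) ^ ((k:ℝ) * (s - s₁)))
            * (ENNReal.ofReal C₁ * sigmaNorm NE s₁ 1 (smoothS k v)) :=
            mul_le_mul_right (h2.trans h1) _
        _ = ENNReal.ofReal C₁ * (ENNReal.ofReal ((2:ℝ) ^ ((k:ℝ) * (s - s₁)))
            * sigmaNorm NE s₁ 1 (smoothS k v)) := by ring
        _ ≤ ENNReal.ofReal C₁ * convK t (aSeq NE s v) k := by
            apply mul_le_mul_right
            rw [sigmaNorm_one_smoothS hN0, Finset.mul_sum]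
            calc ∑ j ∈ Finset.range (k + 1),
                  ENNReal.ofReal ((2:ℝ) ^ ((k:ℝ) * (s - s₁))) * aSeq NE s₁ v j
                ≤ ∑ j ∈ Finset.range (k + 1), ker t k j * aSeq NE s v j := by
                  apply Finset.sum_le_sum
                  intro j hj
                  have hjk : j ≤ k := by simp only [Finset.mem_range] at hj; omega
                  rw [aSeq_shift NE s₁ s v j, ← mul_assoc]
                  exact mul_le_mul_left (hKB1 k j hjk) _
              _ ≤ ∑' j, ker t k j * aSeq NE s v j := ENNReal.sum_le_tsum _
              _ = convK t (aSeq NE s v) k := rfl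
    -- term B
    have hTb : (∑ i ∈ Finset.range (n - k), ENNReal.ofReal ((2:ℝ) ^ ((k:ℝ) * s)
          * ‖Φ (smoothS (k + (i + 1)) v) k - Φ (smoothS (k + i) v) k‖))
        ≤ ENNReal.ofReal C₀ * convK t (aSeq NE s v) k := by
      have hterm : ∀ i : ℕ, ENNReal.ofReal ((2:ℝ) ^ ((k:ℝ) * s)
            * ‖Φ (smoothS (k + (i + 1)) v) k - Φ (smoothS (k + i) v) k‖)
          ≤ ENNReal.ofReal C₀ * (ker t k (k + i + 1) * aSeq NE s v (k + i + 1)) := by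
        intro i
        have h1 := hlip (smoothS (k + i + 1) v) (smoothS (k + i) v)
          (memSigma_one_smoothS hN0 _ v) (memSigma_one_smoothS hN0 _ v)
          (memSigma_smoothS hN0 _ hv) (hball v _ hvr)
          (memSigma_smoothS hN0 _ hv) (hball v _ hvr)
        rw [sigmaNorm_one_succ_sub hN0] at h1
        have h2 : aSeq (fun x : F => ‖x‖) s₀
              (Φ (smoothS (k + i + 1) v) - Φ (smoothS (k + i) v)) k
            ≤ sigmaNorm (fun x : F => ‖x‖) s₀ ⊤
              (Φ (smoothS (k + i + 1) v) - Φ (smoothS (k + i) v)) := by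
          rw [sigmaNorm_eq]; exact le_lq le_top _ k
        have h3 : ENNReal.ofReal ((2:ℝ) ^ ((k:ℝ) * s)
              * ‖Φ (smoothS (k + (i + 1)) v) k - Φ (smoothS (k + i) v) k‖)
            = ENNReal.ofReal ((2:ℝ) ^ ((k:ℝ) * (s - s₀)))
              * aSeq (fun x : F => ‖x‖) s₀
                (Φ (smoothS (k + i + 1) v) - Φ (smoothS (k + i) v)) k := by
          rw [← aSeq_shift]
          have : k + (i + 1) = k + i + 1 := by omega
          rw [this]; rfl
        rw [h3]
        calc ENNReal.ofReal ((2:ℝ) ^ ((k:ℝ) * (s - s₀)))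
              * aSeq (fun x : F => ‖x‖) s₀
                (Φ (smoothS (k + i + 1) v) - Φ (smoothS (k + i) v)) k
            ≤ ENNReal.ofReal ((2:ℝ) ^ ((k:ℝ) * (s - s₀)))
              * (ENNReal.ofReal C₀ * aSeq NE s₀ v (k + i + 1)) :=
              mul_le_mul_right (h2.trans h1) _
          _ = ENNReal.ofReal C₀ * (ENNReal.ofReal ((2:ℝ) ^ ((k:ℝ) * (s - s₀)))
              * (ENNReal.ofReal ((2:ℝ) ^ (((k + i + 1 : ℕ):ℝ) * (s₀ - s)))
                * aSeq NE s v (k + i + 1))) := by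
              rw [← aSeq_shift NE s₀ s v (k + i + 1)]; ring
          _ ≤ ENNReal.ofReal C₀ * (ker t k (k + i + 1) * aSeq NE s v (k + i + 1)) := by
              apply mul_le_mul_right
              rw [← mul_assoc]
              exact mul_le_mul_left (hKB2 k (k + i + 1) (by omega)) _
      calc (∑ i ∈ Finset.range (n - k), ENNReal.ofReal ((2:ℝ) ^ ((k:ℝ) * s)
            * ‖Φ (smoothS (k + (i + 1)) v) k - Φ (smoothS (k + i) v) k‖))
          ≤ ∑ i ∈ Finset.range (n - k),
              ENNReal.ofReal C₀ * (ker t k (k + i + 1) * aSeq NE s v (k + i + 1)) :=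
            Finset.sum_le_sum fun i _ => hterm i
        _ = ENNReal.ofReal C₀ * ∑ i ∈ Finset.range (n - k),
              ker t k (k + i + 1) * aSeq NE s v (k + i + 1) := by rw [Finset.mul_sum]
        _ ≤ ENNReal.ofReal C₀ * convK t (aSeq NE s v) k := by
            apply mul_le_mul_right
            have he : (∑ i ∈ Finset.range (n - k), ker t k (k + i + 1) * aSeq NE s v (k + i + 1))
                = ∑ j ∈ (Finset.range (n - k)).image (fun i => k + i + 1),
                    ker t k j * aSeq NE s v j :=
              (Finset.sum_image (f := fun j => ker t k j * aSeq NE s v j)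
                (g := fun i => k + i + 1) (fun x _ y _ h => by simp only [] at h; omega)).symm
            rw [he]
            exact ENNReal.sum_le_tsum _
    -- term C
    have hTc : ENNReal.ofReal ((2:ℝ) ^ ((k:ℝ) * s) * ‖Φ g k - Φ v k‖) ≤ (ε : ℝ≥0∞) := by
      have h2 : aSeq (fun x : F => ‖x‖) s₀ (Φ g - Φ v) k
          ≤ sigmaNorm (fun x : F => ‖x‖) s₀ ⊤ (Φ g - Φ v) := by
        rw [sigmaNorm_eq]; exact le_lq le_top _ k
      have h3 : ENNReal.ofReal ((2:ℝ) ^ ((k:ℝ) * s) * ‖Φ g k - Φ v k‖)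
          = ENNReal.ofReal ((2:ℝ) ^ ((k:ℝ) * (s - s₀)))
            * aSeq (fun x : F => ‖x‖) s₀ (Φ g - Φ v) k := by
        rw [← aSeq_shift]; rfl
      rw [h3]
      calc ENNReal.ofReal ((2:ℝ) ^ ((k:ℝ) * (s - s₀))) * aSeq (fun x : F => ‖x‖) s₀ (Φ g - Φ v) k
          ≤ ENNReal.ofReal ((2:ℝ) ^ ((k:ℝ) * (s - s₀)))
            * ENNReal.ofReal ((ε : ℝ) / (2:ℝ) ^ ((k:ℝ) * (s - s₀))) :=
            mul_le_mul_right ((h2.trans hΦg.le)) _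
        _ = ENNReal.ofReal ((2:ℝ) ^ ((k:ℝ) * (s - s₀))
            * ((ε : ℝ) / (2:ℝ) ^ ((k:ℝ) * (s - s₀)))) :=
            (ENNReal.ofReal_mul (by positivity)).symm
        _ = ENNReal.ofReal (ε : ℝ) := by rw [mul_comm, div_mul_cancel₀ _ hck.ne']
        _ = (ε : ℝ≥0∞) := ENNReal.ofReal_coe_nnreal
    calc aSeq (fun x : F => ‖x‖) s (Φ v) k
        ≤ _ := hsplit
      _ ≤ (ENNReal.ofReal C₁ * convK t (aSeq NE s v) k
            + ENNReal.ofReal C₀ * convK t (aSeq NE s v) k) + (ε : ℝ≥0∞) :=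
          add_le_add (add_le_add hTa hTb) hTc
      _ = C' * convK t (aSeq NE s v) k + (ε : ℝ≥0∞) := by
          rw [hC'def, ENNReal.ofReal_add hC₀.le hC₁.le]; ring_nf
  -- PART 1
  have part1 : ∀ v, memSigma NE s q v → sigmaNorm NE s q v < ENNReal.ofReal r →
      memSigma (fun x : F => ‖x‖) s q (Φ v) := by
    intro v hv hvr
    have hAfin : lq q (aSeq NE s v) < ⊤ := by
      rw [← sigmaNorm_eq]; exact hvr.trans_le le_top
    by_cases hq' : q = ⊤
    · subst hq'
      simp only [memSigma, if_pos rfl]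
      have htail := tail_small le_top hv (hvr.trans_le le_top)
      have hcts := conv_tail_small le_top ht0 ht1 (aSeq NE s v) hAfin htail
      have hconvfin : ∀ k, convK t (aSeq NE s v) k ≠ ⊤ := fun k =>
        ne_top_of_le_ne_top (ENNReal.mul_ne_top hSt hAfin.ne) (conv_le le_top ht1 _ k)
      have hconv0 : Tendsto (fun k => C' * convK t (aSeq NE s v) k) atTop (nhds 0) := by
        rw [ENNReal.tendsto_atTop_zero]
        intro η hη
        obtain ⟨K, hK⟩ := hcts (η / C') (ENNReal.div_pos hη.ne' hC't)
        refine ⟨K + 1, fun k hk => ?_⟩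
        have h1 : convK t (aSeq NE s v) k ≤ η / C' := by
          have h := le_lq (q := ⊤) le_top
            (fun k => if k ≤ K then 0 else convK t (aSeq NE s v) k) k
          rw [if_neg (by omega : ¬ k ≤ K)] at h
          exact h.trans hK.le
        calc C' * convK t (aSeq NE s v) k ≤ C' * (η / C') := mul_le_mul_right h1 _
          _ ≤ η := ENNReal.mul_div_le
      apply squeeze_zero (g := fun k => (C' * convK t (aSeq NE s v) k).toReal)
        (fun k => by positivity) ?_ ?_
      · intro k
        calc (2:ℝ) ^ ((k:ℝ) * s) * ‖Φ v k‖
            = (aSeq (fun x : F => ‖x‖) s (Φ v) k).toReal :=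
              (ENNReal.toReal_ofReal (by positivity)).symm
          _ ≤ (C' * convK t (aSeq NE s v) k).toReal :=
              ENNReal.toReal_mono (ENNReal.mul_ne_top hC't (hconvfin k)) (key v hv hvr k)
      · have h := (ENNReal.tendsto_toReal (by simp : (0:ℝ≥0∞) ≠ ⊤)).comp hconv0
        rw [ENNReal.toReal_zero] at h
        exact h
    · apply memSigma_of_lt_top hq'
      rw [sigmaNorm_eq]
      calc lq q (aSeq (fun x : F => ‖x‖) s (Φ v))
          ≤ lq q (fun k => C' * convK t (aSeq NE s v) k) := lq_mono (key v hv hvr)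
        _ = C' * lq q (convK t (aSeq NE s v)) := lq_const_mul hq _ _
        _ ≤ C' * (S * lq q (aSeq NE s v)) :=
            mul_le_mul_right (lq_conv_le hq ht0 ht1 _) _
        _ < ⊤ := ENNReal.mul_lt_top (lt_top_iff_ne_top.mpr hC't)
            (ENNReal.mul_lt_top (lt_top_iff_ne_top.mpr hSt) hAfin)
  refine ⟨part1, ?_⟩
  -- PART 2 : continuity
  intro f hf hfr ε hε
  have hAfin : lq q (aSeq NE s f) < ⊤ := by
    rw [← sigmaNorm_eq]; exact hfr.trans_le le_top
  set εE := ENNReal.ofReal ε with hεEdef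
  have hεE0 : 0 < εE := ENNReal.ofReal_pos.mpr hε
  have hε4 : 0 < εE / 4 := ENNReal.div_pos hεE0.ne' (by norm_num)
  obtain ⟨K, hK⟩ := conv_tail_small hq ht0 ht1 (aSeq NE s f) hAfin
    (tail_small hq hf (hfr.trans_le le_top))
    ((εE / 4) / (2 * C')) (ENNReal.div_pos hε4.ne' (ENNReal.mul_ne_top (by norm_num) hC't))
  obtain ⟨δ₁, hδ₁, hδ₁lt⟩ := exists_ofReal_mul_lt (C' * S) (ENNReal.mul_ne_top hC't hSt) hε4
  set MK := ENNReal.ofReal ((2:ℝ) ^ ((K:ℝ) * (s - s₀))) with hMKdef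
  have hMKt : ((K:ℝ≥0∞) + 1) * MK ≠ ⊤ :=
    ENNReal.mul_ne_top (ENNReal.add_ne_top.mpr ⟨ENNReal.natCast_ne_top K, ENNReal.one_ne_top⟩)
      ENNReal.ofReal_ne_top
  obtain ⟨ε₂, hε₂, hε₂lt⟩ := exists_ofReal_mul_lt (((K:ℝ≥0∞) + 1) * MK) hMKt hε4
  obtain ⟨δ₂, hδ₂, hP2⟩ := hΦcont f hf hfr ε₂ hε₂
  refine ⟨min δ₁ δ₂, lt_min hδ₁ hδ₂, ?_⟩
  intro g hg hgr hgf
  have hgf1 : sigmaNorm NE s q (g - f) < ENNReal.ofReal δ₁ :=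
    lt_of_lt_of_le hgf (ENNReal.ofReal_le_ofReal (min_le_left _ _))
  have hgf2 : sigmaNorm NE s q (g - f) < ENNReal.ofReal δ₂ :=
    lt_of_lt_of_le hgf (ENNReal.ofReal_le_ofReal (min_le_right _ _))
  have hD := hP2 g hg hgr hgf2
  show sigmaNorm (fun x : F => ‖x‖) s q (Φ g - Φ f) < εE
  rw [sigmaNorm_eq]
  set aD := aSeq (fun x : F => ‖x‖) s (Φ g - Φ f) with haDdef
  set D := sigmaNorm (fun x : F => ‖x‖) s₀ ⊤ (Φ g - Φ f) with hDdef
  have hcomp : ∀ k : ℕ, aD k ≤ ENNReal.ofReal ((2:ℝ) ^ ((k:ℝ) * (s - s₀))) * D := by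
    intro k
    rw [haDdef, aSeq_shift (fun x : F => ‖x‖) s s₀, hDdef, sigmaNorm_eq]
    exact mul_le_mul_right (le_lq le_top _ k) _
  have hag : ∀ j, aSeq NE s g j ≤ aSeq NE s f j + aSeq NE s (g - f) j := by
    intro j
    unfold aSeq
    rw [← ENNReal.ofReal_add (mul_nonneg (by positivity) (hNE.nonneg _))
      (mul_nonneg (by positivity) (hNE.nonneg _))]
    apply ENNReal.ofReal_le_ofReal
    rw [← mul_add]
    apply mul_le_mul_of_nonneg_left ?_ (by positivity)
    have hge : g j = f j + (g - f) j := by simp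
    rw [hge]
    exact hNE.add_le _ _
  have hptail : ∀ k, aD k ≤ 2 * C' * convK t (aSeq NE s f) k
      + C' * convK t (aSeq NE s (g - f)) k := by
    intro k
    have h1 : aD k ≤ aSeq (fun x : F => ‖x‖) s (Φ g) k
        + aSeq (fun x : F => ‖x‖) s (Φ f) k := by
      rw [haDdef]
      unfold aSeq
      rw [← ENNReal.ofReal_add (by positivity) (by positivity)]
      apply ENNReal.ofReal_le_ofReal
      rw [← mul_add]
      apply mul_le_mul_of_nonneg_left ?_ (by positivity)
      simpa using norm_sub_le (Φ g k) (Φ f k)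
    have h4 : convK t (aSeq NE s g) k
        ≤ convK t (aSeq NE s f) k + convK t (aSeq NE s (g - f)) k := by
      calc convK t (aSeq NE s g) k
          ≤ convK t (fun j => aSeq NE s f j + aSeq NE s (g - f) j) k := conv_mono hag k
        _ = _ := conv_add k
    calc aD k ≤ aSeq (fun x : F => ‖x‖) s (Φ g) k + aSeq (fun x : F => ‖x‖) s (Φ f) k := h1
      _ ≤ C' * convK t (aSeq NE s g) k + C' * convK t (aSeq NE s f) k :=
          add_le_add (key g hg hgr k) (key f hf hfr k)
      _ ≤ C' * (convK t (aSeq NE s f) k + convK t (aSeq NE s (g - f)) k)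
          + C' * convK t (aSeq NE s f) k :=
          add_le_add_left (mul_le_mul_right h4 _) _
      _ = 2 * C' * convK t (aSeq NE s f) k + C' * convK t (aSeq NE s (g - f)) k := by ring
  have hdecomp : ∀ k, aD k ≤ (if k ≤ K then aD k else 0) + (if k ≤ K then 0 else aD k) := by
    intro k; split <;> simp
  have hhead : lq q (fun k => if k ≤ K then aD k else 0) < εE / 4 := by
    have hb : ∀ k, (if k ≤ K then aD k else 0) ≤ (if k ≤ K then MK * D else 0) := by
      intro k
      split
      · rename_i hk
        refine (hcomp k).trans (mul_le_mul_left ?_ _)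
        rw [hMKdef]
        apply ENNReal.ofReal_le_ofReal
        apply (Real.rpow_le_rpow_left_iff one_lt_two).mpr
        have hks : (k:ℝ) ≤ (K:ℝ) := Nat.cast_le.mpr hk
        nlinarith
      · exact le_rfl
    calc lq q (fun k => if k ≤ K then aD k else 0)
        ≤ ∑' k, (if k ≤ K then MK * D else 0) :=
          le_trans (lq_mono hb) (lq_le_tsum hq _)
      _ = ∑ k ∈ Finset.range (K + 1), (if k ≤ K then MK * D else 0) :=
          tsum_eq_sum fun b hb' => if_neg (by simp only [Finset.mem_range] at hb'; omega)
      _ ≤ ∑ _k ∈ Finset.range (K + 1), MK * D :=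
          Finset.sum_le_sum fun i _ => by split <;> simp
      _ = ((K:ℝ≥0∞) + 1) * MK * D := by
          rw [Finset.sum_const, Finset.card_range, nsmul_eq_mul]
          push_cast
          ring
      _ ≤ ((K:ℝ≥0∞) + 1) * MK * ENNReal.ofReal ε₂ := mul_le_mul_right hD.le _
      _ = ENNReal.ofReal ε₂ * (((K:ℝ≥0∞) + 1) * MK) := by ring
      _ < εE / 4 := hε₂lt
  have htail2a : lq q (fun k => if k ≤ K then 0 else 2 * C' * convK t (aSeq NE s f) k)
      < εE / 4 := by
    have he : (fun k => if k ≤ K then 0 else 2 * C' * convK t (aSeq NE s f) k)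
        = fun k => 2 * C' * (if k ≤ K then 0 else convK t (aSeq NE s f) k) := by
      funext k; split <;> simp
    rw [he, lq_const_mul hq]
    calc 2 * C' * lq q (fun k => if k ≤ K then 0 else convK t (aSeq NE s f) k)
        < 2 * C' * ((εE / 4) / (2 * C')) := by
          rw [ENNReal.mul_lt_mul_iff_right (mul_ne_zero two_ne_zero hC'0)
            (ENNReal.mul_ne_top (by norm_num) hC't)]
          exact hK
      _ ≤ εE / 4 := ENNReal.mul_div_le
  have htail2b : C' * lq q (convK t (aSeq NE s (g - f))) < εE / 4 := by
    calc C' * lq q (convK t (aSeq NE s (g - f)))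
        ≤ C' * (S * lq q (aSeq NE s (g - f))) :=
          mul_le_mul_right (lq_conv_le hq ht0 ht1 _) _
      _ = C' * S * sigmaNorm NE s q (g - f) := by rw [sigmaNorm_eq]; ring
      _ < C' * S * ENNReal.ofReal δ₁ := by
          rw [ENNReal.mul_lt_mul_iff_right (mul_ne_zero hC'0 hS0) (ENNReal.mul_ne_top hC't hSt)]
          exact hgf1
      _ = ENNReal.ofReal δ₁ * (C' * S) := by ring
      _ < εE / 4 := hδ₁lt
  calc lq q aD
      ≤ lq q (fun k => (if k ≤ K then aD k else 0) + (if k ≤ K then 0 else aD k)) :=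
        lq_mono hdecomp
    _ ≤ lq q (fun k => if k ≤ K then aD k else 0)
        + lq q (fun k => if k ≤ K then 0 else aD k) := lq_add_le hq _ _
    _ ≤ lq q (fun k => if k ≤ K then aD k else 0)
        + (lq q (fun k => if k ≤ K then 0 else 2 * C' * convK t (aSeq NE s f) k)
          + C' * lq q (convK t (aSeq NE s (g - f)))) := by
        apply add_le_add_right
        calc lq q (fun k => if k ≤ K then 0 else aD k)
            ≤ lq q (fun k => (if k ≤ K then 0 else 2 * C' * convK t (aSeq NE s f) k)
                + C' * convK t (aSeq NE s (g - f)) k) := by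
              apply lq_mono
              intro k
              split
              · exact le_add_right (zero_le)
              · exact hptail k
          _ ≤ lq q (fun k => if k ≤ K then 0 else 2 * C' * convK t (aSeq NE s f) k)
              + lq q (fun k => C' * convK t (aSeq NE s (g - f)) k) := lq_add_le hq _ _
          _ = lq q (fun k => if k ≤ K then 0 else 2 * C' * convK t (aSeq NE s f) k)
              + C' * lq q (convK t (aSeq NE s (g - f))) := by rw [lq_const_mul hq]
    _ < εE / 4 + (εE / 4 + εE / 4) :=
        ENNReal.add_lt_add hhead (ENNReal.add_lt_add htail2a htail2b)
    _ ≤ εE / 3 + (εE / 3 + εE / 3) := by gcongr <;> norm_num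
    _ = εE := by rw [← add_assoc]; exact ENNReal.add_thirds εE
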